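/- Let L be a 5-dimensional nilpotent Lie algebra of coclass 3 (i.e., of nilpotency class 2) over a field 𝔽 of characteristic different from 2. Then there exist commuting automorphisms α and β of L whose composite α ∘ β is not a commuting automorphism (i.e., 𝒜(L) is not a subgroup of Aut(L)) if and only if L' = Z(L) and dim Z(L) = 1. -/

import Mathlib

set_option linter.unusedSectionVars false

open Module Submodule

section Aux

variable {F L : Type*} [Field F] [LieRing L] [LieAlgebra F L]

lemma aux_smul (α : L ≃ₗ⁅F⁆ L) (c : F) (x : L) : α (c • x) = c • α x := by
  exact map_smul α c x

lemma aux_sub (α : L ≃ₗ⁅F⁆ L) (x y : L) : α (x - y) = α x - α y := by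
  exact map_sub α x y

lemma aux_center_map (α : L ≃ₗ⁅F⁆ L) {x : L} (hx : x ∈ LieAlgebra.center F L) :
    α x ∈ LieAlgebra.center F L := by
  rw [LieModule.mem_maxTrivSubmodule] at hx ⊢
  intro y
  have h1 : ⁅y, α x⁆ = ⁅α (α.symm y), α x⁆ := by rw [α.apply_symm_apply y]
  rw [h1, ← α.map_lie (α.symm y) x, hx]
  exact map_zero α

lemma aux_comp_commuting (α β : L ≃ₗ⁅F⁆ L) (a b : F)
    (hα : ∀ v : L, α v - a • v ∈ LieAlgebra.center F L)
    (hβ : ∀ v : L, β v - b • v ∈ LieAlgebra.center F L) (v : L) :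
    ⁅α (β v), v⁆ = 0 := by
  have h1 : α (β v) - (a * b) • v ∈ LieAlgebra.center F L := by
    have e1 := aux_center_map α (hβ v)
    have e2 := hα (b • v)
    have h : α (β v) - (a * b) • v = α (β v - b • v) + (α (b • v) - a • (b • v)) := by
      rw [aux_sub, aux_smul]
      module
    rw [h]
    exact add_mem e1 (by simpa using e2)
  have hcen := (LieModule.mem_maxTrivSubmodule F L L _).mp h1
  have h2 : α (β v) = (α (β v) - (a * b) • v) + (a * b) • v := by abel
  rw [h2, add_lie, smul_lie, lie_self, smul_zero, add_zero, ← lie_skew, hcen v, neg_zero]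

lemma aux_map_lie_of_basis {ι : Type*} [Fintype ι] (B : Basis ι F L) (A : L →ₗ[F] L)
    (h : ∀ i j, A ⁅B i, B j⁆ = ⁅A (B i), A (B j)⁆) (x y : L) : A ⁅x, y⁆ = ⁅A x, A y⁆ := by
  have h1 : ∀ i (y : L), A ⁅B i, y⁆ = ⁅A (B i), A y⁆ := by
    intro i y
    let m1 : L →ₗ[F] L :=
      { toFun := fun w => A ⁅B i, w⁆
        map_add' := fun u v => by
          show A ⁅B i, u + v⁆ = A ⁅B i, u⁆ + A ⁅B i, v⁆
          rw [lie_add, map_add]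
        map_smul' := fun c u => by
          show A ⁅B i, c • u⁆ = c • A ⁅B i, u⁆
          rw [lie_smul, map_smul] }
    let m2 : L →ₗ[F] L :=
      { toFun := fun w => ⁅A (B i), A w⁆
        map_add' := fun u v => by
          show ⁅A (B i), A (u + v)⁆ = ⁅A (B i), A u⁆ + ⁅A (B i), A v⁆
          rw [map_add, lie_add]
        map_smul' := fun c u => by
          show ⁅A (B i), A (c • u)⁆ = c • ⁅A (B i), A u⁆
          rw [map_smul, lie_smul] }
    exact LinearMap.congr_fun (B.ext (fun j => h i j) : m1 = m2) y
  let n1 : L →ₗ[F] L :=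
    { toFun := fun w => A ⁅w, y⁆
      map_add' := fun u v => by
        show A ⁅u + v, y⁆ = A ⁅u, y⁆ + A ⁅v, y⁆
        rw [add_lie, map_add]
      map_smul' := fun c u => by
        show A ⁅c • u, y⁆ = c • A ⁅u, y⁆
        rw [smul_lie, map_smul] }
  let n2 : L →ₗ[F] L :=
    { toFun := fun w => ⁅A w, A y⁆
      map_add' := fun u v => by
        show ⁅A (u + v), A y⁆ = ⁅A u, A y⁆ + ⁅A v, A y⁆
        rw [map_add, add_lie]
      map_smul' := fun c u => by
        show ⁅A (c • u), A y⁆ = c • ⁅A u, A y⁆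
        rw [map_smul, smul_lie] }
  exact LinearMap.congr_fun (B.ext (fun i => h1 i y) : n1 = n2) x

lemma aux_invol_commuting (h2 : (2 : F) ≠ 0) (z : L) (α : L ≃ₗ⁅F⁆ L)
    (hbr : ∀ x y : L, ∃ c : F, ⁅x, y⁆ = c • z) (hz : α z = z)
    (hinv : ∀ x, α (α x) = x) (x : L) : ⁅α x, x⁆ = 0 := by
  obtain ⟨c, hc⟩ := hbr (α x) x
  have e1 : α ⁅α x, x⁆ = - ⁅α x, x⁆ := by
    rw [α.map_lie (α x) x, hinv, ← lie_skew]
  have e2 : α ⁅α x, x⁆ = ⁅α x, x⁆ := by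
    rw [hc, aux_smul, hz]
  have e4 : (2 : F) • ⁅α x, x⁆ = 0 := by
    rw [two_smul]
    nth_rewrite 1 [← e2]
    rw [e1, neg_add_cancel]
  rcases smul_eq_zero.mp e4 with h | h
  · exact absurd h h2
  · exact h

end Aux
open Module Submodule
section Aux2
variable {F L : Type*} [Field F] [LieRing L] [LieAlgebra F L] [FiniteDimensional F L]

lemma aux_class2 (hclass : LieModule.lowerCentralSeries F L L 2 = ⊥) (x y w : L) :
    ⁅x, ⁅y, w⁆⁆ = 0 := by
  have h1 : ⁅x, ⁅y, w⁆⁆ ∈ LieModule.lowerCentralSeries F L L 2 := by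
    rw [show (2 : ℕ) = 1 + 1 from rfl, LieModule.lowerCentralSeries_succ]
    refine LieSubmodule.lie_mem_lie (LieSubmodule.mem_top _) ?_
    rw [show (1 : ℕ) = 0 + 1 from rfl, LieModule.lowerCentralSeries_succ]
    exact LieSubmodule.lie_mem_lie (LieSubmodule.mem_top _) (LieSubmodule.mem_top _)
  rw [hclass] at h1
  exact (LieSubmodule.mem_bot _).mp h1

lemma aux_bracket_center (hclass : LieModule.lowerCentralSeries F L L 2 = ⊥) (x y : L) :
    ⁅x, y⁆ ∈ LieAlgebra.center F L :=
  (LieModule.mem_maxTrivSubmodule F L L _).mpr fun u => aux_class2 hclass u x y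

lemma aux_exists_bracket (hclass' : LieModule.lowerCentralSeries F L L 1 ≠ ⊥) :
    ∃ x y : L, ⁅x, y⁆ ≠ 0 := by
  by_contra h
  push_neg at h
  apply hclass'
  rw [show (1 : ℕ) = 0 + 1 from rfl, LieModule.lowerCentralSeries_succ]
  exact (LieSubmodule.lie_eq_bot_iff _ _).mpr fun x _ m _ => h x m

lemma aux_lcs1_le_center (hclass : LieModule.lowerCentralSeries F L L 2 = ⊥) :
    LieModule.lowerCentralSeries F L L 1 ≤ LieAlgebra.center F L := by
  rw [show (1 : ℕ) = 0 + 1 from rfl, LieModule.lowerCentralSeries_succ]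
  exact (LieSubmodule.lie_le_iff _ _ _).mpr fun x _ m _ => aux_bracket_center hclass x m

lemma aux_sup_span (M : Submodule F L) (e : L) (hM : e ∉ M) :
    finrank F ↥(M ⊔ span F {e}) = finrank F ↥M + 1 := by
  have he0 : e ≠ 0 := fun h => hM (h ▸ M.zero_mem)
  have hd : M ⊓ span F {e} = ⊥ :=
    ((Submodule.disjoint_span_singleton' he0).mpr hM).eq_bot
  have := Submodule.finrank_sup_add_finrank_inf_eq M (span F {e})
  rw [hd, finrank_bot, finrank_span_singleton he0] at this
  omega

lemma aux_exists_not_mem (M : Submodule F L) (h : finrank F ↥M < finrank F L) :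
    ∃ e, e ∉ M := by
  by_contra hc
  push_neg at hc
  have : M = ⊤ := Submodule.eq_top_iff'.mpr hc
  rw [this, finrank_top] at h
  omega

lemma aux_dual (z : L) (hz : z ≠ 0) : ∃ g : L →ₗ[F] F, g z = 1 := by
  obtain ⟨g, hg⟩ := LinearMap.exists_leftInverse_of_injective
    (LinearMap.toSpanSingleton F L z) (LinearMap.ker_toSpanSingleton (R := F) (M := L) hz)
  refine ⟨g, ?_⟩
  have := LinearMap.congr_fun hg 1
  simpa using this

end Aux2
open Module Submodule
section Aux3
variable {F L : Type*} [Field F] [LieRing L] [LieAlgebra F L] [FiniteDimensional F L]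

lemma aux_lie_cen {w : L} (hw : w ∈ LieAlgebra.center F L) (u : L) : ⁅u, w⁆ = 0 :=
  (LieModule.mem_maxTrivSubmodule F L L w).mp hw u

lemma aux_cen_lie {w : L} (hw : w ∈ LieAlgebra.center F L) (u : L) : ⁅w, u⁆ = 0 := by
  rw [← lie_skew, aux_lie_cen hw, neg_zero]

lemma aux_cadd {a b : L} (ha : a ∈ LieAlgebra.center F L) (hb : b ∈ LieAlgebra.center F L) :
    a + b ∈ LieAlgebra.center F L := by
  rw [LieModule.mem_maxTrivSubmodule] at *
  intro x; rw [lie_add, ha x, hb x, add_zero]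

lemma aux_csub {a b : L} (ha : a ∈ LieAlgebra.center F L) (hb : b ∈ LieAlgebra.center F L) :
    a - b ∈ LieAlgebra.center F L := by
  rw [LieModule.mem_maxTrivSubmodule] at *
  intro x; rw [lie_sub, ha x, hb x, sub_zero]

lemma aux_csmul (c : F) {a : L} (ha : a ∈ LieAlgebra.center F L) :
    c • a ∈ LieAlgebra.center F L := by
  rw [LieModule.mem_maxTrivSubmodule] at *
  intro x; rw [lie_smul, ha x, smul_zero]

lemma aux_czero : (0 : L) ∈ LieAlgebra.center F L := by
  rw [LieModule.mem_maxTrivSubmodule]; intro x; rw [lie_zero]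

lemma aux_add (α : L ≃ₗ⁅F⁆ L) (x y : L) : α (x + y) = α x + α y := by
  exact map_add α x y

lemma aux_not_cen {x : L} (hx : x ∉ LieAlgebra.center F L) : ∃ u : L, ⁅x, u⁆ ≠ 0 := by
  by_contra h
  push_neg at h
  exact hx ((LieModule.mem_maxTrivSubmodule F L L x).mpr fun u => by
    rw [← lie_skew, h u, neg_zero])

lemma aux_setup_codim2 (hdim : Module.finrank F L = 5)
    (hZ : finrank F ↥(LieAlgebra.center F L) = 3) :
    ∃ e1 e2 : L, ⁅e1, e2⁆ ≠ 0 ∧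
      ∀ v : L, ∃ a b : F, ∃ w ∈ LieAlgebra.center F L, v = a • e1 + b • e2 + w := by
  set Z := (LieAlgebra.center F L).toSubmodule with hZdef
  have hZ3 : finrank F ↥Z = 3 := hZ
  obtain ⟨e1, he1⟩ := aux_exists_not_mem Z (by rw [hZ3, hdim]; omega)
  have he1' : e1 ∉ LieAlgebra.center F L := fun h => he1 ((LieSubmodule.mem_toSubmodule _).mpr h)
  obtain ⟨e2, he2⟩ := aux_not_cen he1'
  have he2' : e2 ∉ Z ⊔ span F {e1} := by
    intro hmem
    obtain ⟨w, hw, t, ht, hsum⟩ := Submodule.mem_sup.mp hmem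
    obtain ⟨a, ha⟩ := Submodule.mem_span_singleton.mp ht
    apply he2
    rw [← hsum, ← ha, lie_add, lie_smul, lie_self, smul_zero,
      aux_lie_cen ((LieSubmodule.mem_toSubmodule _).mp hw), add_zero]
  have hT : Z ⊔ span F {e1} ⊔ span F {e2} = ⊤ := by
    apply Submodule.eq_top_of_finrank_eq
    rw [aux_sup_span _ _ he2', aux_sup_span _ _ he1, hZ3, hdim]
  refine ⟨e1, e2, he2, fun v => ?_⟩
  have hv : v ∈ Z ⊔ span F {e1} ⊔ span F {e2} := hT ▸ Submodule.mem_top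
  obtain ⟨y, hy, t2, ht2, hsum2⟩ := Submodule.mem_sup.mp hv
  obtain ⟨w, hw, t1, ht1, hsum1⟩ := Submodule.mem_sup.mp hy
  obtain ⟨a, ha⟩ := Submodule.mem_span_singleton.mp ht1
  obtain ⟨b, hb⟩ := Submodule.mem_span_singleton.mp ht2
  refine ⟨a, b, w, (LieSubmodule.mem_toSubmodule _).mp hw, ?_⟩
  rw [← hsum2, ← hsum1, ← ha, ← hb]
  module

lemma aux_scalar_codim2 (e1 e2 : L) (hbr : ⁅e1, e2⁆ ≠ 0)
    (hdec : ∀ v : L, ∃ a b : F, ∃ w ∈ LieAlgebra.center F L, v = a • e1 + b • e2 + w)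
    (α : L ≃ₗ⁅F⁆ L) (hα : ∀ x : L, ⁅α x, x⁆ = 0) :
    ∃ a : F, ∀ v : L, α v - a • v ∈ LieAlgebra.center F L := by
  set z0 := ⁅e1, e2⁆ with hz0
  have h21 : ⁅e2, e1⁆ = -z0 := by rw [← lie_skew]
  have hbb : ∀ (a b : F) (w : L), w ∈ LieAlgebra.center F L → ∀ (c d : F) (w' : L),
      w' ∈ LieAlgebra.center F L →
      ⁅a • e1 + b • e2 + w, c • e1 + d • e2 + w'⁆ = (a * d - b * c) • z0 := by
    intro a b w hw c d w' hw'
    simp only [add_lie, lie_add, smul_lie, lie_smul, lie_self, smul_zero, add_zero, zero_add,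
      aux_lie_cen hw', aux_cen_lie hw, h21, ← hz0]
    module
  obtain ⟨a1, b1, w1, hw1, hαe1⟩ := hdec (α e1)
  obtain ⟨a2, b2, w2, hw2, hαe2⟩ := hdec (α e2)
  have he1eq : e1 = (1:F) • e1 + (0:F) • e2 + 0 := by module
  have he2eq : e2 = (0:F) • e1 + (1:F) • e2 + 0 := by module
  have hb1 : b1 = 0 := by
    have h := hα e1
    rw [hαe1] at h
    nth_rewrite 2 [he1eq] at h
    rw [hbb a1 b1 w1 hw1 1 0 0 aux_czero] at h
    have : b1 • z0 = 0 := by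
      have := h
      rw [show a1 * 0 - b1 * 1 = -b1 by ring, neg_smul, neg_eq_zero] at this
      exact this
    exact (smul_eq_zero.mp this).resolve_right hbr
  have ha2 : a2 = 0 := by
    have h := hα e2
    rw [hαe2] at h
    nth_rewrite 2 [he2eq] at h
    rw [hbb a2 b2 w2 hw2 0 1 0 aux_czero] at h
    rw [show a2 * 1 - b2 * 0 = a2 by ring] at h
    exact (smul_eq_zero.mp h).resolve_right hbr
  have hsum : α (e1 + e2) = a1 • e1 + b2 • e2 + (w1 + w2) := by
    rw [aux_add, hαe1, hαe2, hb1, ha2]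
    module
  have h12eq : e1 + e2 = (1:F) • e1 + (1:F) • e2 + 0 := by module
  have haa : a1 = b2 := by
    have h := hα (e1 + e2)
    rw [hsum] at h
    rw [h12eq] at h
    rw [hbb a1 b2 (w1 + w2) (aux_cadd hw1 hw2) 1 1 0 aux_czero] at h
    have := (smul_eq_zero.mp h).resolve_right hbr
    linear_combination this
  refine ⟨a1, fun v => ?_⟩
  obtain ⟨p, q, w, hw, hveq⟩ := hdec v
  have hαv : α v - a1 • v = p • w1 + q • w2 + (α w - a1 • w) := by
    rw [hveq, aux_add, aux_add, aux_smul, aux_smul, hαe1, hαe2, hb1, ha2, ← haa]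
    module
  rw [hαv]
  exact aux_cadd (aux_cadd (aux_csmul p hw1) (aux_csmul q hw2))
    (aux_csub (aux_center_map α hw) (aux_csmul a1 hw))

end Aux3

section Aux4
variable {F L : Type*} [Field F] [LieRing L] [LieAlgebra F L] [FiniteDimensional F L]

lemma aux_two_indep {z1 z2 : L} (hz12 : ∀ c : F, z2 ≠ c • z1) (hz1 : z1 ≠ 0)
    {p q : F} (h : p • z1 + q • z2 = 0) : p = 0 ∧ q = 0 := by
  have hq : q = 0 := by
    by_contra hq
    apply hz12 (-(q⁻¹ * p))
    have h2 : q • z2 = -(p • z1) := by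
      rw [eq_neg_iff_add_eq_zero]
      rw [add_comm] at h
      exact h
    have h3 : z2 = q⁻¹ • (q • z2) := (inv_smul_smul₀ hq z2).symm
    rw [h2] at h3
    rw [h3]
    rw [smul_neg, smul_smul, ← neg_smul]
  refine ⟨?_, hq⟩
  rw [hq, zero_smul, add_zero] at h
  exact (smul_eq_zero.mp h).resolve_right hz1

lemma aux_dec3 (a b c : L)
    (hT : (LieAlgebra.center F L).toSubmodule ⊔ span F {a} ⊔ span F {b} ⊔ span F {c} = ⊤)
    (v : L) : ∃ x y t : F, ∃ w ∈ LieAlgebra.center F L, v = x • a + y • b + t • c + w := by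
  have hv : v ∈ (LieAlgebra.center F L).toSubmodule ⊔ span F {a} ⊔ span F {b} ⊔ span F {c} :=
    hT ▸ Submodule.mem_top
  obtain ⟨y3, hy3, t3, ht3, hs3⟩ := Submodule.mem_sup.mp hv
  obtain ⟨y2, hy2, t2, ht2, hs2⟩ := Submodule.mem_sup.mp hy3
  obtain ⟨w, hw, t1, ht1, hs1⟩ := Submodule.mem_sup.mp hy2
  obtain ⟨x, hx⟩ := Submodule.mem_span_singleton.mp ht1
  obtain ⟨y, hy⟩ := Submodule.mem_span_singleton.mp ht2
  obtain ⟨t, ht⟩ := Submodule.mem_span_singleton.mp ht3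
  refine ⟨x, y, t, w, (LieSubmodule.mem_toSubmodule _).mp hw, ?_⟩
  rw [← hs3, ← hs2, ← hs1, ← hx, ← hy, ← ht]
  module

lemma aux_setup_codim3 (hclass : LieModule.lowerCentralSeries F L L 2 = ⊥)
    (hdim : Module.finrank F L = 5) (hZ : finrank F ↥(LieAlgebra.center F L) = 2) :
    ∃ e1 e2 e3 z1 z2 : L, ⁅e2, e1⁆ = z1 ∧ ⁅e1, e3⁆ = z2 ∧ ⁅e2, e3⁆ = 0 ∧ z1 ≠ 0 ∧
      (∀ c : F, z2 ≠ c • z1) ∧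
      ∀ v : L, ∃ a b c : F, ∃ w ∈ LieAlgebra.center F L, v = a • e1 + b • e2 + c • e3 + w := by
  classical
  set Z := (LieAlgebra.center F L).toSubmodule with hZdef
  have hZ2 : finrank F ↥Z = 2 := hZ
  -- choose u1, u2, u3
  obtain ⟨u1, hu1⟩ := aux_exists_not_mem Z (by rw [hZ2, hdim]; omega)
  have hu1' : u1 ∉ LieAlgebra.center F L := fun h => hu1 ((LieSubmodule.mem_toSubmodule _).mpr h)
  obtain ⟨u2, hu2br⟩ := aux_not_cen hu1'
  set c1 := ⁅u1, u2⁆ with hc1def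
  have hu2 : u2 ∉ Z ⊔ span F {u1} := by
    intro hmem
    obtain ⟨w, hw, t, ht, hsum⟩ := Submodule.mem_sup.mp hmem
    obtain ⟨d, hd⟩ := Submodule.mem_span_singleton.mp ht
    apply hu2br
    rw [hc1def, ← hsum, ← hd, lie_add, lie_smul, lie_self, smul_zero,
      aux_lie_cen ((LieSubmodule.mem_toSubmodule _).mp hw), add_zero]
  obtain ⟨u3, hu3⟩ := aux_exists_not_mem (Z ⊔ span F {u1} ⊔ span F {u2})
    (by rw [aux_sup_span _ _ hu2, aux_sup_span _ _ hu1, hZ2, hdim]; omega)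
  have hT0 : Z ⊔ span F {u1} ⊔ span F {u2} ⊔ span F {u3} = ⊤ := by
    apply Submodule.eq_top_of_finrank_eq
    rw [aux_sup_span _ _ hu3, aux_sup_span _ _ hu2, aux_sup_span _ _ hu1, hZ2, hdim]
  have hdec0 : ∀ v : L, ∃ x y t : F, ∃ w ∈ LieAlgebra.center F L,
      v = x • u1 + y • u2 + t • u3 + w := aux_dec3 u1 u2 u3 hT0
  obtain ⟨g, hg1⟩ := aux_dual (F := F) c1 hu2br
  set c2 := ⁅u1, u3⁆ with hc2def
  set c3 := ⁅u2, u3⁆ with hc3def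
  set e2 := g c3 • u1 - g c2 • u2 + u3 with he2def
  set K := LinearMap.ker g ⊓ Z with hKdef
  have hKe2 : ∀ v : L, ⁅e2, v⁆ ∈ K := by
    have h1 : ⁅e2, u1⁆ ∈ K := by
      have he : ⁅e2, u1⁆ = g c2 • c1 - c2 := by
        rw [he2def, add_lie, sub_lie, smul_lie, smul_lie, lie_self, smul_zero,
          show ⁅u2, u1⁆ = -c1 by rw [← lie_skew, hc1def],
          show ⁅u3, u1⁆ = -c2 by rw [← lie_skew, hc2def]]
        module
      rw [he]
      refine Submodule.mem_inf.mpr ⟨?_, ?_⟩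
      · rw [LinearMap.mem_ker, map_sub, map_smul, hg1, smul_eq_mul, mul_one, sub_self]
      · exact sub_mem (Submodule.smul_mem _ _ ((LieSubmodule.mem_toSubmodule _).mpr
          (aux_bracket_center hclass u1 u2)))
          ((LieSubmodule.mem_toSubmodule _).mpr (aux_bracket_center hclass u1 u3))
    have h2 : ⁅e2, u2⁆ ∈ K := by
      have he : ⁅e2, u2⁆ = g c3 • c1 - c3 := by
        rw [he2def, add_lie, sub_lie, smul_lie, smul_lie, lie_self, smul_zero,
          show ⁅u3, u2⁆ = -c3 by rw [← lie_skew, hc3def], ← hc1def]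
        module
      rw [he]
      refine Submodule.mem_inf.mpr ⟨?_, ?_⟩
      · rw [LinearMap.mem_ker, map_sub, map_smul, hg1, smul_eq_mul, mul_one, sub_self]
      · exact sub_mem (Submodule.smul_mem _ _ ((LieSubmodule.mem_toSubmodule _).mpr
          (aux_bracket_center hclass u1 u2)))
          ((LieSubmodule.mem_toSubmodule _).mpr (aux_bracket_center hclass u2 u3))
    have h3 : ⁅e2, u3⁆ ∈ K := by
      have he : ⁅e2, u3⁆ = g c3 • c2 - g c2 • c3 := by
        rw [he2def, add_lie, sub_lie, smul_lie, smul_lie, lie_self, add_zero,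
          ← hc2def, ← hc3def]
      rw [he]
      refine Submodule.mem_inf.mpr ⟨?_, ?_⟩
      · rw [LinearMap.mem_ker, map_sub, map_smul, map_smul, smul_eq_mul, smul_eq_mul,
          mul_comm, sub_self]
      · exact sub_mem (Submodule.smul_mem _ _ ((LieSubmodule.mem_toSubmodule _).mpr
          (aux_bracket_center hclass u1 u3)))
          (Submodule.smul_mem _ _ ((LieSubmodule.mem_toSubmodule _).mpr
          (aux_bracket_center hclass u2 u3)))
    intro v
    obtain ⟨x, y, t, w, hw, hveq⟩ := hdec0 v
    rw [hveq, lie_add, lie_add, lie_add, lie_smul, lie_smul, lie_smul, aux_lie_cen hw]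
    exact add_mem (add_mem (add_mem (Submodule.smul_mem _ _ h1) (Submodule.smul_mem _ _ h2))
      (Submodule.smul_mem _ _ h3)) (zero_mem _)
  have he2Z : e2 ∉ Z := by
    intro hmem
    apply hu3
    have : u3 = e2 - g c3 • u1 + g c2 • u2 := by rw [he2def]; module
    rw [this]
    refine Submodule.add_mem _ (Submodule.sub_mem _ ?_ ?_) ?_
    · exact Submodule.mem_sup_left (Submodule.mem_sup_left hmem)
    · exact Submodule.smul_mem _ _ (Submodule.mem_sup_left (Submodule.mem_sup_right
        (Submodule.mem_span_singleton_self u1)))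
    · exact Submodule.smul_mem _ _ (Submodule.mem_sup_right (Submodule.mem_span_singleton_self u2))
  have he2Z' : e2 ∉ LieAlgebra.center F L := fun h => he2Z ((LieSubmodule.mem_toSubmodule _).mpr h)
  obtain ⟨e1, hz1ne⟩ := aux_not_cen he2Z'
  set z1 := ⁅e2, e1⁆ with hz1def
  have hz1K : z1 ∈ K := hKe2 e1
  -- K = span z1
  have hc1Z : c1 ∈ Z := (LieSubmodule.mem_toSubmodule _).mpr (aux_bracket_center hclass u1 u2)
  have hKne : K ≠ Z := by
    intro h
    have hck : c1 ∈ K := h ▸ hc1Z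
    have hk := (Submodule.mem_inf.mp hck).1
    rw [LinearMap.mem_ker, hg1] at hk
    exact one_ne_zero hk
  have hKle : K ≤ Z := inf_le_right
  have hfK : finrank F ↥K ≤ 1 := by
    by_contra hcon
    push_neg at hcon
    apply hKne
    apply Submodule.eq_of_le_of_finrank_le hKle
    omega
  have hspan : span F {z1} = K := by
    apply Submodule.eq_of_le_of_finrank_le
    · rw [Submodule.span_le, Set.singleton_subset_iff]; exact hz1K
    · rw [finrank_span_singleton hz1ne]; exact hfK
  have hline : ∀ v : L, ∃ c : F, ⁅e2, v⁆ = c • z1 := by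
    intro v
    have := hKe2 v
    rw [← hspan] at this
    obtain ⟨c, hc⟩ := Submodule.mem_span_singleton.mp this
    exact ⟨c, hc.symm⟩
  -- find e3
  have hWge : 4 ≤ finrank F ↥(LinearMap.ker (LieAlgebra.ad F L e2)) := by
    have hr := LinearMap.finrank_range_add_finrank_ker (LieAlgebra.ad F L e2)
    have hrle : LinearMap.range (LieAlgebra.ad F L e2) ≤ span F {z1} := by
      rintro y ⟨v, rfl⟩
      rw [LieAlgebra.ad_apply]
      obtain ⟨c, hc⟩ := hline v
      rw [hc]
      exact Submodule.smul_mem _ _ (Submodule.mem_span_singleton_self z1)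
    have := Submodule.finrank_mono hrle
    rw [finrank_span_singleton hz1ne] at this
    rw [hdim] at hr
    omega
  have hDle : Z ⊔ span F {e2} ≤ LinearMap.ker (LieAlgebra.ad F L e2) := by
    apply sup_le
    · intro w hw
      rw [LinearMap.mem_ker, LieAlgebra.ad_apply]
      exact aux_lie_cen ((LieSubmodule.mem_toSubmodule _).mp hw) e2
    · rw [Submodule.span_le, Set.singleton_subset_iff]
      rw [SetLike.mem_coe, LinearMap.mem_ker, LieAlgebra.ad_apply]
      exact lie_self e2
  have hD3 : finrank F ↥(Z ⊔ span F {e2}) = 3 := by rw [aux_sup_span _ _ he2Z, hZ2]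
  obtain ⟨e3, he3W, he3D⟩ : ∃ e3 ∈ LinearMap.ker (LieAlgebra.ad F L e2),
      e3 ∉ Z ⊔ span F {e2} := by
    rw [← SetLike.not_le_iff_exists]
    intro hle
    have := Submodule.finrank_mono hle
    omega
  have he23 : ⁅e2, e3⁆ = 0 := by
    rw [LinearMap.mem_ker, LieAlgebra.ad_apply] at he3W
    exact he3W
  have he1D : e1 ∉ Z ⊔ span F {e2} := by
    intro hmem
    obtain ⟨w, hw, t, ht, hsum⟩ := Submodule.mem_sup.mp hmem
    obtain ⟨d, hd⟩ := Submodule.mem_span_singleton.mp ht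
    apply hz1ne
    rw [hz1def, ← hsum, ← hd, lie_add, lie_smul, lie_self, smul_zero, add_zero,
      aux_lie_cen ((LieSubmodule.mem_toSubmodule _).mp hw)]
  have he3D' : e3 ∉ Z ⊔ span F {e2} ⊔ span F {e1} := by
    intro hmem
    obtain ⟨y, hy, t, ht, hsum⟩ := Submodule.mem_sup.mp hmem
    obtain ⟨a, ha⟩ := Submodule.mem_span_singleton.mp ht
    have hbr : ⁅e2, e3⁆ = a • z1 := by
      rw [← hsum, ← ha, lie_add, lie_smul, ← hz1def]
      obtain ⟨w, hw, s, hs, hsum2⟩ := Submodule.mem_sup.mp hy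
      obtain ⟨b, hb⟩ := Submodule.mem_span_singleton.mp hs
      rw [← hsum2, ← hb, lie_add, lie_smul, lie_self, smul_zero,
        aux_lie_cen ((LieSubmodule.mem_toSubmodule _).mp hw), add_zero, zero_add]
    rw [he23] at hbr
    have ha0 : a = 0 := by
      rcases smul_eq_zero.mp hbr.symm with h | h
      · exact h
      · exact absurd h hz1ne
    apply he3D
    rw [← hsum, ← ha, ha0, zero_smul, add_zero]
    exact hy
  have hT : Z ⊔ span F {e2} ⊔ span F {e1} ⊔ span F {e3} = ⊤ := by
    apply Submodule.eq_top_of_finrank_eq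
    rw [aux_sup_span _ _ he3D', aux_sup_span _ _ he1D, aux_sup_span _ _ he2Z, hZ2, hdim]
  have hdec : ∀ v : L, ∃ a b c : F, ∃ w ∈ LieAlgebra.center F L,
      v = a • e1 + b • e2 + c • e3 + w := by
    intro v
    obtain ⟨x, y, t, w, hw, hveq⟩ := aux_dec3 e2 e1 e3 hT v
    exact ⟨y, x, t, w, hw, by rw [hveq]; module⟩
  set z2 := ⁅e1, e3⁆ with hz2def
  have hz12 : ∀ c : F, z2 ≠ c • z1 := by
    intro c hc
    have hvcen : e3 + c • e2 ∈ LieAlgebra.center F L := by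
      rw [LieModule.mem_maxTrivSubmodule]
      intro u
      obtain ⟨a, b, d, w, hw, hueq⟩ := hdec u
      have h12 : ⁅e1, e2⁆ = -z1 := by rw [← lie_skew, ← hz1def]
      have h32 : ⁅e3, e2⁆ = 0 := by rw [← lie_skew, he23, neg_zero]
      rw [hueq]
      simp only [add_lie, smul_lie, lie_add, lie_smul, lie_self, he23, h12, h32, ← hz2def,
        aux_cen_lie hw, smul_zero, add_zero, zero_add, smul_neg]
      rw [hc]
      module
    apply he3D
    have he3eq : e3 = (e3 + c • e2) + (-c) • e2 := by module
    rw [he3eq]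
    refine Submodule.add_mem _ ?_ ?_
    · exact Submodule.mem_sup_left ((LieSubmodule.mem_toSubmodule _).mpr hvcen)
    · exact Submodule.smul_mem _ _ (Submodule.mem_sup_right (Submodule.mem_span_singleton_self e2))
  exact ⟨e1, e2, e3, z1, z2, rfl, rfl, he23, hz1ne, hz12, hdec⟩

end Aux4
section Aux5
variable {F L : Type*} [Field F] [LieRing L] [LieAlgebra F L] [FiniteDimensional F L]

lemma aux_scalar_codim3 (e1 e2 e3 z1 z2 : L) (h21 : ⁅e2, e1⁆ = z1) (h13 : ⁅e1, e3⁆ = z2)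
    (h23 : ⁅e2, e3⁆ = 0) (hz1 : z1 ≠ 0) (hz12 : ∀ c : F, z2 ≠ c • z1)
    (hdec : ∀ v : L, ∃ a b c : F, ∃ w ∈ LieAlgebra.center F L, v = a • e1 + b • e2 + c • e3 + w)
    (α : L ≃ₗ⁅F⁆ L) (hα : ∀ x : L, ⁅α x, x⁆ = 0) :
    ∃ a : F, ∀ v : L, α v - a • v ∈ LieAlgebra.center F L := by
  have h12 : ⁅e1, e2⁆ = -z1 := by rw [← lie_skew, h21]
  have h31 : ⁅e3, e1⁆ = -z2 := by rw [← lie_skew, h13]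
  have h32 : ⁅e3, e2⁆ = 0 := by rw [← lie_skew, h23, neg_zero]
  have hbb : ∀ (a b c : F) (w : L), w ∈ LieAlgebra.center F L → ∀ (a' b' c' : F) (w' : L),
      w' ∈ LieAlgebra.center F L →
      ⁅a • e1 + b • e2 + c • e3 + w, a' • e1 + b' • e2 + c' • e3 + w'⁆ =
        (b * a' - a * b') • z1 + (a * c' - c * a') • z2 := by
    intro a b c w hw a' b' c' w' hw'
    simp only [add_lie, lie_add, smul_lie, lie_smul, lie_self, smul_zero, add_zero, zero_add,
      aux_lie_cen hw', aux_cen_lie hw, h21, h12, h13, h23, h31, h32, smul_neg]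
    module
  obtain ⟨a1, b1, c1, w1, hw1, hαe1⟩ := hdec (α e1)
  obtain ⟨a2, b2, c2, w2, hw2, hαe2⟩ := hdec (α e2)
  obtain ⟨a3, b3, c3, w3, hw3, hαe3⟩ := hdec (α e3)
  have he1eq : e1 = (1:F) • e1 + (0:F) • e2 + (0:F) • e3 + 0 := by module
  have he2eq : e2 = (0:F) • e1 + (1:F) • e2 + (0:F) • e3 + 0 := by module
  have he3eq : e3 = (0:F) • e1 + (0:F) • e2 + (1:F) • e3 + 0 := by module
  -- from ⁅α e1, e1⁆ = 0 : b1 = 0 and c1 = 0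
  have h1 := hα e1
  rw [hαe1] at h1
  nth_rewrite 2 [he1eq] at h1
  rw [hbb a1 b1 c1 w1 hw1 1 0 0 0 aux_czero] at h1
  rw [show b1 * 1 - a1 * 0 = b1 by ring, show a1 * 0 - c1 * 1 = -c1 by ring] at h1
  obtain ⟨hb1, hc1⟩ := aux_two_indep hz12 hz1 h1
  rw [neg_eq_zero] at hc1
  -- from ⁅α e2, e2⁆ = 0 : a2 = 0
  have h2 := hα e2
  rw [hαe2] at h2
  nth_rewrite 2 [he2eq] at h2
  rw [hbb a2 b2 c2 w2 hw2 0 1 0 0 aux_czero] at h2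
  rw [show b2 * 0 - a2 * 1 = -a2 by ring, show a2 * 0 - c2 * 0 = 0 by ring] at h2
  obtain ⟨ha2, -⟩ := aux_two_indep hz12 hz1 h2
  rw [neg_eq_zero] at ha2
  -- from ⁅α e3, e3⁆ = 0 : a3 = 0
  have h3 := hα e3
  rw [hαe3] at h3
  nth_rewrite 2 [he3eq] at h3
  rw [hbb a3 b3 c3 w3 hw3 0 0 1 0 aux_czero] at h3
  rw [show b3 * 0 - a3 * 0 = 0 by ring, show a3 * 1 - c3 * 0 = a3 by ring] at h3
  have ha3 : a3 = 0 := (aux_two_indep hz12 hz1 h3).2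
  -- from ⁅α (e1+e2), e1+e2⁆ = 0 : b2 = a1, c2 = 0
  have h12s := hα (e1 + e2)
  have hsum12 : α (e1 + e2) = a1 • e1 + b2 • e2 + c2 • e3 + (w1 + w2) := by
    rw [aux_add, hαe1, hαe2, hb1, hc1, ha2]
    module
  rw [hsum12, show e1 + e2 = (1:F) • e1 + (1:F) • e2 + (0:F) • e3 + 0 by module,
    hbb a1 b2 c2 (w1 + w2) (aux_cadd hw1 hw2) 1 1 0 0 aux_czero] at h12s
  rw [show b2 * 1 - a1 * 1 = b2 - a1 by ring, show a1 * 0 - c2 * 1 = -c2 by ring] at h12s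
  obtain ⟨hb2, hc2⟩ := aux_two_indep hz12 hz1 h12s
  rw [neg_eq_zero] at hc2
  rw [sub_eq_zero] at hb2
  -- from ⁅α (e1+e3), e1+e3⁆ = 0 : b3 = 0, c3 = a1
  have h13s := hα (e1 + e3)
  have hsum13 : α (e1 + e3) = a1 • e1 + b3 • e2 + c3 • e3 + (w1 + w3) := by
    rw [aux_add, hαe1, hαe3, hb1, hc1, ha3]
    module
  rw [hsum13, show e1 + e3 = (1:F) • e1 + (0:F) • e2 + (1:F) • e3 + 0 by module,
    hbb a1 b3 c3 (w1 + w3) (aux_cadd hw1 hw3) 1 0 1 0 aux_czero] at h13s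
  rw [show b3 * 1 - a1 * 0 = b3 by ring, show a1 * 1 - c3 * 1 = a1 - c3 by ring] at h13s
  obtain ⟨hb3, hc3⟩ := aux_two_indep hz12 hz1 h13s
  rw [sub_eq_zero] at hc3
  refine ⟨a1, fun v => ?_⟩
  obtain ⟨p, q, t, w, hw, hveq⟩ := hdec v
  have hαv : α v - a1 • v = p • w1 + q • w2 + t • w3 + (α w - a1 • w) := by
    rw [hveq, aux_add, aux_add, aux_add, aux_smul, aux_smul, aux_smul, hαe1, hαe2, hαe3,
      hb1, hc1, ha2, hc2, hb2, ha3, hb3, ← hc3]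
    module
  rw [hαv]
  exact aux_cadd (aux_cadd (aux_cadd (aux_csmul p hw1) (aux_csmul q hw2)) (aux_csmul t hw3))
    (aux_csub (aux_center_map α hw) (aux_csmul a1 hw))

end Aux5
section Aux6
variable {F L : Type*} [Field F] [LieRing L] [LieAlgebra F L] [FiniteDimensional F L]

lemma aux_k_le3 (hclass' : LieModule.lowerCentralSeries F L L 1 ≠ ⊥)
    (hdim : Module.finrank F L = 5) :
    finrank F ↥(LieAlgebra.center F L) ≤ 3 := by
  by_contra hcon
  push_neg at hcon
  obtain ⟨x, y, hxy⟩ := aux_exists_bracket hclass'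
  set Z := (LieAlgebra.center F L).toSubmodule with hZdef
  have hk4 : 4 ≤ finrank F ↥Z := hcon
  have hZle : finrank F ↥Z ≤ 5 := hdim ▸ Z.finrank_le
  by_cases hZT : Z = ⊤
  · have hxZ : x ∈ Z := by rw [hZT]; exact Submodule.mem_top
    exact hxy (aux_cen_lie ((LieSubmodule.mem_toSubmodule _).mp hxZ) y)
  · have hlt : finrank F ↥Z < 5 := by
      rcases lt_or_eq_of_le hZle with h | h
      · exact h
      · exact absurd (Submodule.eq_top_of_finrank_eq (by rw [h, hdim])) hZT
    obtain ⟨e, he⟩ := aux_exists_not_mem Z (by rw [hdim]; exact hlt)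
    have hsup : Z ⊔ span F {e} = ⊤ := by
      apply Submodule.eq_top_of_finrank_eq
      rw [aux_sup_span _ _ he, hdim]
      omega
    obtain ⟨w, hw, t, ht, hsx⟩ := Submodule.mem_sup.mp (hsup ▸ Submodule.mem_top : x ∈ _)
    obtain ⟨a, ha⟩ := Submodule.mem_span_singleton.mp ht
    obtain ⟨w', hw', t', ht', hsy⟩ := Submodule.mem_sup.mp (hsup ▸ Submodule.mem_top : y ∈ _)
    obtain ⟨b, hb⟩ := Submodule.mem_span_singleton.mp ht'
    apply hxy
    simp only [← hsx, ← hsy, ← ha, ← hb, add_lie, lie_add, lie_smul, smul_lie, lie_self,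
      smul_zero, aux_cen_lie ((LieSubmodule.mem_toSubmodule _).mp hw),
      aux_lie_cen ((LieSubmodule.mem_toSubmodule _).mp hw'), zero_add, add_zero]

lemma aux_k1 (hclass : LieModule.lowerCentralSeries F L L 2 = ⊥)
    (hclass' : LieModule.lowerCentralSeries F L L 1 ≠ ⊥)
    (h1 : finrank F ↥(LieAlgebra.center F L) = 1) :
    LieModule.lowerCentralSeries F L L 1 = LieAlgebra.center F L := by
  apply LieSubmodule.toSubmodule_injective
  have hle : (LieModule.lowerCentralSeries F L L 1).toSubmodule ≤
      (LieAlgebra.center F L).toSubmodule := by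
    intro x hx
    exact (LieSubmodule.mem_toSubmodule _).mpr
      (aux_lcs1_le_center hclass ((LieSubmodule.mem_toSubmodule _).mp hx))
  have h1' : finrank F ↥(LieAlgebra.center F L).toSubmodule = 1 := h1
  apply Submodule.eq_of_le_of_finrank_le hle
  have hne : (LieModule.lowerCentralSeries F L L 1).toSubmodule ≠ ⊥ := by
    intro h
    apply hclass'
    apply LieSubmodule.toSubmodule_injective
    rw [h]
    rfl
  have : finrank F ↥(LieModule.lowerCentralSeries F L L 1).toSubmodule ≠ 0 :=
    fun h => hne (Submodule.finrank_eq_zero.mp h)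
  rw [h1']
  omega

lemma aux_forward (hchar : ringChar F ≠ 2) (hdim : Module.finrank F L = 5)
    (hclass : LieModule.lowerCentralSeries F L L 2 = ⊥)
    (hclass' : LieModule.lowerCentralSeries F L L 1 ≠ ⊥)
    (hnot : ¬(LieModule.lowerCentralSeries F L L 1 = LieAlgebra.center F L ∧
      finrank F ↥(LieAlgebra.center F L) = 1))
    (α β : L ≃ₗ⁅F⁆ L) (hα : ∀ x : L, ⁅α x, x⁆ = 0) (hβ : ∀ x : L, ⁅β x, x⁆ = 0) :
    ∀ x : L, ⁅α (β x), x⁆ = 0 := by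
  have hk3 := aux_k_le3 hclass' hdim
  have hk1 : finrank F ↥(LieAlgebra.center F L) ≠ 0 := by
    intro h
    have hbot : (LieAlgebra.center F L : LieSubmodule F L L) = ⊥ := by
      have := Submodule.finrank_eq_zero.mp h
      apply LieSubmodule.toSubmodule_injective
      rw [this]
      rfl
    apply hclass'
    rw [eq_bot_iff]
    calc LieModule.lowerCentralSeries F L L 1 ≤ LieAlgebra.center F L :=
          aux_lcs1_le_center hclass
      _ = ⊥ := hbot
  have hkne1 : finrank F ↥(LieAlgebra.center F L) ≠ 1 := by
    intro h
    exact hnot ⟨aux_k1 hclass hclass' h, h⟩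
  have hk23 : finrank F ↥(LieAlgebra.center F L) = 2 ∨
      finrank F ↥(LieAlgebra.center F L) = 3 := by omega
  rcases hk23 with hk | hk
  · obtain ⟨e1, e2, e3, z1, z2, h21, h13, h23, hz1, hz12, hdec⟩ :=
      aux_setup_codim3 hclass hdim hk
    obtain ⟨a, ha⟩ := aux_scalar_codim3 e1 e2 e3 z1 z2 h21 h13 h23 hz1 hz12 hdec α hα
    obtain ⟨b, hb⟩ := aux_scalar_codim3 e1 e2 e3 z1 z2 h21 h13 h23 hz1 hz12 hdec β hβ
    exact aux_comp_commuting α β a b ha hb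
  · obtain ⟨e1, e2, hbr, hdec⟩ := aux_setup_codim2 hdim hk
    obtain ⟨a, ha⟩ := aux_scalar_codim2 e1 e2 hbr hdec α hα
    obtain ⟨b, hb⟩ := aux_scalar_codim2 e1 e2 hbr hdec β hβ
    exact aux_comp_commuting α β a b ha hb

end Aux6
section Aux7
variable {F L : Type*} [Field F] [LieRing L] [LieAlgebra F L] [FiniteDimensional F L]

lemma aux_symp (hdim : Module.finrank F L = 5)
    (hclass : LieModule.lowerCentralSeries F L L 2 = ⊥)
    (hZ1 : finrank F ↥(LieAlgebra.center F L) = 1) :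
    ∃ (e1 f1 e2 f2 z : L), z ∈ LieAlgebra.center F L ∧ z ≠ 0 ∧
      (∀ x y : L, ∃ c : F, ⁅x, y⁆ = c • z) ∧
      ⁅e1, f1⁆ = z ∧ ⁅e2, f2⁆ = z ∧ ⁅e1, e2⁆ = 0 ∧ ⁅e1, f2⁆ = 0 ∧ ⁅f1, e2⁆ = 0 ∧
      ⁅f1, f2⁆ = 0 ∧ LinearIndependent F ![e1, f1, e2, f2, z] := by
  classical
  set Z := (LieAlgebra.center F L).toSubmodule with hZdef
  have hZ1' : finrank F ↥Z = 1 := hZ1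
  have hZbot : Z ≠ ⊥ := by
    intro h
    rw [h] at hZ1'
    rw [finrank_bot] at hZ1'
    omega
  obtain ⟨z, hzZ, hz⟩ := Submodule.exists_mem_ne_zero_of_ne_bot hZbot
  have hspanZ : span F {z} = Z := by
    apply Submodule.eq_of_le_of_finrank_le
    · rw [Submodule.span_le, Set.singleton_subset_iff]; exact hzZ
    · rw [finrank_span_singleton hz, hZ1']
  have hzc : z ∈ LieAlgebra.center F L := (LieSubmodule.mem_toSubmodule _).mp hzZ
  have hbrZ : ∀ x y : L, ⁅x, y⁆ ∈ Z :=
    fun x y => (LieSubmodule.mem_toSubmodule _).mpr (aux_bracket_center hclass x y)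
  have hbrspan : ∀ x y : L, ∃ c : F, ⁅x, y⁆ = c • z := by
    intro x y
    obtain ⟨c, hc⟩ := Submodule.mem_span_singleton.mp (hspanZ ▸ hbrZ x y)
    exact ⟨c, hc.symm⟩
  obtain ⟨g, hg1⟩ := aux_dual (F := F) z hz
  have hcoord : ∀ x y : L, ⁅x, y⁆ = g ⁅x, y⁆ • z := by
    intro x y
    obtain ⟨c, hc⟩ := hbrspan x y
    rw [hc, map_smul, hg1, smul_eq_mul, mul_one]
  -- e1 and f1
  obtain ⟨e1, he1⟩ := aux_exists_not_mem Z (by rw [hZ1', hdim]; omega)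
  have he1c : e1 ∉ LieAlgebra.center F L := fun h => he1 ((LieSubmodule.mem_toSubmodule _).mpr h)
  obtain ⟨v1, hv1⟩ := aux_not_cen he1c
  obtain ⟨c, hc⟩ := hbrspan e1 v1
  have hcne : c ≠ 0 := by
    intro h
    rw [h, zero_smul] at hc
    exact hv1 hc
  set f1 := c⁻¹ • v1 with hf1def
  have h11 : ⁅e1, f1⁆ = z := by
    rw [hf1def, lie_smul, hc, smul_smul, inv_mul_cancel₀ hcne, one_smul]
  have h11' : ⁅f1, e1⁆ = -z := by rw [← lie_skew, h11]
  -- the subspace W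
  have hker1 : 4 ≤ finrank F ↥(LinearMap.ker (LieAlgebra.ad F L e1)) := by
    have hr := LinearMap.finrank_range_add_finrank_ker (LieAlgebra.ad F L e1)
    have hrle : LinearMap.range (LieAlgebra.ad F L e1) ≤ Z := by
      rintro y ⟨v, rfl⟩
      rw [LieAlgebra.ad_apply]
      exact hbrZ e1 v
    have := Submodule.finrank_mono hrle
    rw [hZ1'] at this
    rw [hdim] at hr
    omega
  have hker2 : 4 ≤ finrank F ↥(LinearMap.ker (LieAlgebra.ad F L f1)) := by
    have hr := LinearMap.finrank_range_add_finrank_ker (LieAlgebra.ad F L f1)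
    have hrle : LinearMap.range (LieAlgebra.ad F L f1) ≤ Z := by
      rintro y ⟨v, rfl⟩
      rw [LieAlgebra.ad_apply]
      exact hbrZ f1 v
    have := Submodule.finrank_mono hrle
    rw [hZ1'] at this
    rw [hdim] at hr
    omega
  have hWge : 3 ≤ finrank F
      ↥(LinearMap.ker (LieAlgebra.ad F L e1) ⊓ LinearMap.ker (LieAlgebra.ad F L f1)) := by
    have hs := Submodule.finrank_sup_add_finrank_inf_eq
      (LinearMap.ker (LieAlgebra.ad F L e1)) (LinearMap.ker (LieAlgebra.ad F L f1))
    have hsle : finrank F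
        ↥(LinearMap.ker (LieAlgebra.ad F L e1) ⊔ LinearMap.ker (LieAlgebra.ad F L f1)) ≤ 5 :=
      hdim ▸ Submodule.finrank_le _
    omega
  obtain ⟨e2, he2W, he2Z⟩ : ∃ e2 ∈ LinearMap.ker (LieAlgebra.ad F L e1) ⊓
      LinearMap.ker (LieAlgebra.ad F L f1), e2 ∉ Z := by
    rw [← SetLike.not_le_iff_exists]
    intro hle
    have := Submodule.finrank_mono hle
    omega
  have h12 : ⁅e1, e2⁆ = 0 := by
    have := (Submodule.mem_inf.mp he2W).1
    rwa [LinearMap.mem_ker, LieAlgebra.ad_apply] at this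
  have h22 : ⁅f1, e2⁆ = 0 := by
    have := (Submodule.mem_inf.mp he2W).2
    rwa [LinearMap.mem_ker, LieAlgebra.ad_apply] at this
  have h12' : ⁅e2, e1⁆ = 0 := by rw [← lie_skew, h12, neg_zero]
  have h22' : ⁅e2, f1⁆ = 0 := by rw [← lie_skew, h22, neg_zero]
  -- f2
  have he2c : e2 ∉ LieAlgebra.center F L := fun h => he2Z ((LieSubmodule.mem_toSubmodule _).mpr h)
  obtain ⟨v2, hv2⟩ := aux_not_cen he2c
  set f2' := v2 + g ⁅f1, v2⁆ • e1 - g ⁅e1, v2⁆ • f1 with hf2'def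
  have h1f2' : ⁅e1, f2'⁆ = 0 := by
    rw [hf2'def, lie_sub, lie_add, lie_smul, lie_smul, lie_self, smul_zero, add_zero, h11]
    rw [← hcoord e1 v2]
    rw [sub_self]
  have h2f2' : ⁅f1, f2'⁆ = 0 := by
    rw [hf2'def, lie_sub, lie_add, lie_smul, lie_smul, lie_self, smul_zero, sub_zero, h11']
    rw [smul_neg, ← hcoord f1 v2]
    rw [add_neg_cancel]
  have h3f2' : ⁅e2, f2'⁆ = ⁅e2, v2⁆ := by
    rw [hf2'def, lie_sub, lie_add, lie_smul, lie_smul, h12', h22', smul_zero, smul_zero,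
      add_zero, sub_zero]
  obtain ⟨c', hc'⟩ := hbrspan e2 f2'
  have hc'ne : c' ≠ 0 := by
    intro h
    rw [h, zero_smul] at hc'
    rw [h3f2'] at hc'
    exact hv2 hc'
  set f2 := c'⁻¹ • f2' with hf2def
  have h33 : ⁅e2, f2⁆ = z := by
    rw [hf2def, lie_smul, hc', smul_smul, inv_mul_cancel₀ hc'ne, one_smul]
  have h1f2 : ⁅e1, f2⁆ = 0 := by rw [hf2def, lie_smul, h1f2', smul_zero]
  have h2f2 : ⁅f1, f2⁆ = 0 := by rw [hf2def, lie_smul, h2f2', smul_zero]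
  -- linear independence
  have hli : LinearIndependent F ![e1, f1, e2, f2, z] := by
    rw [Fintype.linearIndependent_iff]
    intro q hq
    rw [Fin.sum_univ_five] at hq
    simp only [Matrix.cons_val_zero, Matrix.cons_val_one, Matrix.head_cons,
      Matrix.cons_val_two, Matrix.tail_cons, Matrix.cons_val_three, Matrix.cons_val_four] at hq
    have h33' : ⁅f2, e2⁆ = -z := by rw [← lie_skew, h33]
    have h11'' : ⁅f1, e1⁆ = -z := by rw [← lie_skew, h11]
    have h1f2' : ⁅f2, e1⁆ = 0 := by rw [← lie_skew, h1f2, neg_zero]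
    have h2f2'' : ⁅f2, f1⁆ = 0 := by rw [← lie_skew, h2f2, neg_zero]
    have hq0 : q 0 = 0 := by
      have := congrArg (fun u => ⁅u, f1⁆) hq
      simp only [add_lie, smul_lie, zero_lie, h11, h22', h2f2'', lie_self,
        aux_cen_lie hzc, smul_zero, add_zero, zero_add] at this
      exact (smul_eq_zero.mp this).resolve_right hz
    have hq1 : q 1 = 0 := by
      have := congrArg (fun u => ⁅e1, u⁆) hq
      simp only [lie_add, lie_smul, lie_zero, h11, h12, h1f2, lie_self,
        aux_lie_cen hzc, smul_zero, add_zero, zero_add] at this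
      exact (smul_eq_zero.mp this).resolve_right hz
    have hq3 : q 3 = 0 := by
      have := congrArg (fun u => ⁅e2, u⁆) hq
      simp only [lie_add, lie_smul, lie_zero, h33, h12', h22', lie_self,
        aux_lie_cen hzc, smul_zero, add_zero, zero_add] at this
      exact (smul_eq_zero.mp this).resolve_right hz
    have hq2 : q 2 = 0 := by
      have := congrArg (fun u => ⁅u, f2⁆) hq
      simp only [add_lie, smul_lie, zero_lie, h33, h1f2, h2f2, lie_self,
        aux_cen_lie hzc, smul_zero, add_zero, zero_add] at this
      exact (smul_eq_zero.mp this).resolve_right hz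
    have hq4 : q 4 = 0 := by
      rw [hq0, hq1, hq2, hq3] at hq
      simp only [zero_smul, zero_add] at hq
      exact (smul_eq_zero.mp hq).resolve_right hz
    intro i
    fin_cases i
    · exact hq0
    · exact hq1
    · exact hq2
    · exact hq3
    · exact hq4
  exact ⟨e1, f1, e2, f2, z, hzc, hz, hbrspan, h11, h33, h12, h1f2, h22, h2f2, hli⟩

end Aux7
section Aux8
variable {F L : Type*} [Field F] [LieRing L] [LieAlgebra F L] [FiniteDimensional F L]

lemma aux_backward (h2 : (2 : F) ≠ 0) (hdim : Module.finrank F L = 5)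
    (hclass : LieModule.lowerCentralSeries F L L 2 = ⊥)
    (hZ1 : finrank F ↥(LieAlgebra.center F L) = 1) :
    ∃ α β : L ≃ₗ⁅F⁆ L, (∀ x : L, ⁅α x, x⁆ = 0) ∧ (∀ x : L, ⁅β x, x⁆ = 0) ∧
      ¬ (∀ x : L, ⁅α (β x), x⁆ = 0) := by
  classical
  obtain ⟨e1, f1, e2, f2, z, hzc, hz, hbrspan, t1, t2, t3, t4, t5, t6, hli⟩ :=
    aux_symp hdim hclass hZ1
  have r1 : ⁅f1, e1⁆ = -z := by rw [← lie_skew, t1]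
  have r2 : ⁅f2, e2⁆ = -z := by rw [← lie_skew, t2]
  have r3 : ⁅e2, e1⁆ = 0 := by rw [← lie_skew, t3, neg_zero]
  have r4 : ⁅f2, e1⁆ = 0 := by rw [← lie_skew, t4, neg_zero]
  have r5 : ⁅e2, f1⁆ = 0 := by rw [← lie_skew, t5, neg_zero]
  have r6 : ⁅f2, f1⁆ = 0 := by rw [← lie_skew, t6, neg_zero]
  have hcard : Fintype.card (Fin 5) = finrank F L := by rw [hdim]; simp
  set B : Basis (Fin 5) F L := basisOfLinearIndependentOfCardEqFinrank hli hcard with hBdef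
  have hB : ⇑B = ![e1, f1, e2, f2, z] := by
    rw [hBdef]
    exact coe_basisOfLinearIndependentOfCardEqFinrank hli hcard
  have hB0 : B 0 = e1 := by rw [hB]; rfl
  have hB1 : B 1 = f1 := by rw [hB]; rfl
  have hB2 : B 2 = e2 := by rw [hB]; rfl
  have hB3 : B 3 = f2 := by rw [hB]; rfl
  have hB4 : B 4 = z := by rw [hB]; rfl
  -- the linear map A (for α)
  set A : L →ₗ[F] L := B.constr F ![e1, f1, -e2, -f2, z] with hAdef
  have hAe1 : A e1 = e1 := by
    conv_lhs => rw [← hB0]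
    rw [hAdef, B.constr_basis]
    simp
  have hAf1 : A f1 = f1 := by
    conv_lhs => rw [← hB1]
    rw [hAdef, B.constr_basis]
    simp
  have hAe2 : A e2 = -e2 := by
    conv_lhs => rw [← hB2]
    rw [hAdef, B.constr_basis]
    simp
  have hAf2 : A f2 = -f2 := by
    conv_lhs => rw [← hB3]
    rw [hAdef, B.constr_basis]
    simp
  have hAz : A z = z := by
    conv_lhs => rw [← hB4]
    rw [hAdef, B.constr_basis]
    simp
  have hAA : ∀ x, A (A x) = x := by
    have hcmp : A ∘ₗ A = LinearMap.id := by
      apply B.ext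
      intro i
      fin_cases i <;>
        simp [hB, hAe1, hAf1, hAe2, hAf2, hAz, map_neg]
    intro x
    have := LinearMap.congr_fun hcmp x
    simpa using this
  have hAlie : ∀ x y : L, A ⁅x, y⁆ = ⁅A x, A y⁆ := by
    apply aux_map_lie_of_basis B A
    intro i j
    fin_cases i <;> fin_cases j <;>
      simp [hB, t1, t2, t3, t4, t5, t6, r1, r2, r3, r4, r5, r6, lie_self,
        aux_cen_lie hzc, aux_lie_cen hzc, hAe1, hAf1, hAe2, hAf2, hAz, map_neg]
  -- the linear map C (for β)
  set C : L →ₗ[F] L := B.constr F ![e2, f2, e1, f1, z] with hCdef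
  have hCe1 : C e1 = e2 := by
    conv_lhs => rw [← hB0]
    rw [hCdef, B.constr_basis]
    simp
  have hCf1 : C f1 = f2 := by
    conv_lhs => rw [← hB1]
    rw [hCdef, B.constr_basis]
    simp
  have hCe2 : C e2 = e1 := by
    conv_lhs => rw [← hB2]
    rw [hCdef, B.constr_basis]
    simp
  have hCf2 : C f2 = f1 := by
    conv_lhs => rw [← hB3]
    rw [hCdef, B.constr_basis]
    simp
  have hCz : C z = z := by
    conv_lhs => rw [← hB4]
    rw [hCdef, B.constr_basis]
    simp
  have hCC : ∀ x, C (C x) = x := by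
    have hcmp : C ∘ₗ C = LinearMap.id := by
      apply B.ext
      intro i
      fin_cases i <;>
        simp [hB, hCe1, hCf1, hCe2, hCf2, hCz]
    intro x
    have := LinearMap.congr_fun hcmp x
    simpa using this
  have hClie : ∀ x y : L, C ⁅x, y⁆ = ⁅C x, C y⁆ := by
    apply aux_map_lie_of_basis B C
    intro i j
    fin_cases i <;> fin_cases j <;>
      simp [hB, t1, t2, t3, t4, t5, t6, r1, r2, r3, r4, r5, r6, lie_self,
        aux_cen_lie hzc, aux_lie_cen hzc, hCe1, hCf1, hCe2, hCf2, hCz]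
  -- build the Lie algebra automorphisms
  let αeq : L ≃ₗ⁅F⁆ L :=
    ⟨{ toLinearMap := A, map_lie' := fun {x y} => hAlie x y }, A, hAA, hAA⟩
  let βeq : L ≃ₗ⁅F⁆ L :=
    ⟨{ toLinearMap := C, map_lie' := fun {x y} => hClie x y }, C, hCC, hCC⟩
  have hαx : ∀ x, αeq x = A x := fun _ => rfl
  have hβx : ∀ x, βeq x = C x := fun _ => rfl
  refine ⟨αeq, βeq, ?_, ?_, ?_⟩
  · exact aux_invol_commuting h2 z αeq hbrspan (by rw [hαx]; exact hAz)
      (fun x => by rw [hαx, hαx]; exact hAA x)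
  · exact aux_invol_commuting h2 z βeq hbrspan (by rw [hβx]; exact hCz)
      (fun x => by rw [hβx, hβx]; exact hCC x)
  · intro hcc
    have hval := hcc (e1 + f2)
    rw [hβx, hαx] at hval
    rw [map_add, hCe1, hCf2, map_add, hAe2, hAf1] at hval
    rw [show ⁅-e2 + f1, e1 + f2⁆ = -((2:F) • z) by
      rw [add_lie, lie_add, lie_add, neg_lie, neg_lie, r3, t2, r1, t6]; module] at hval
    rw [neg_eq_zero] at hval
    exact (smul_ne_zero h2 hz) hval

end Aux8

/-- Let `L` be a `5`-dimensional nilpotent Lie algebra of coclass `3` (i.e. of nilpotency class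
`2`) over a field `𝔽` of characteristic different from `2`. Then there exist commuting
automorphisms `α` and `β` of `L` whose composite `α ∘ β` is not a commuting automorphism
(i.e. `𝒜(L)` is not a subgroup of `Aut(L)`) if and only if `L' = Z(L)` and `dim Z(L) = 1`. -/
theorem exists_commuting_auts_comp_not_commuting_iff_of_dim_five_coclass_three
    {F L : Type*} [Field F] [LieRing L] [LieAlgebra F L] [FiniteDimensional F L]
    (hchar : ringChar F ≠ 2) (hdim : Module.finrank F L = 5)
    (hclass : LieModule.lowerCentralSeries F L L 2 = ⊥)
    (hclass' : LieModule.lowerCentralSeries F L L 1 ≠ ⊥) :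
    (∃ α β : L ≃ₗ⁅F⁆ L, (∀ x : L, ⁅α x, x⁆ = 0) ∧ (∀ x : L, ⁅β x, x⁆ = 0) ∧
        ¬ (∀ x : L, ⁅α (β x), x⁆ = 0)) ↔
      (LieModule.lowerCentralSeries F L L 1 = LieAlgebra.center F L ∧
        Module.finrank F ↥(LieAlgebra.center F L) = 1) := by
  constructor
  · rintro ⟨α, β, hα, hβ, hne⟩
    by_contra hnot
    exact hne (aux_forward hchar hdim hclass hclass' hnot α β hα hβ)
  · rintro ⟨hL', hZ1⟩
    exact aux_backward (Ring.two_ne_zero hchar) hdim hclass hZ1
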